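/- In the example Y ~ N(μ, σ²), U ~ Bernoulli(1/2) independent of Y, X = arctan(Y²) + Uπ with μ = 0 (α = 0): E(Y|X) = 0 almost surely, hence the simplified (predictive) maximal correlation sup_f ρ(f(X), Y) = 0, while Y² = tan(X), so HGR(X,Y) = 1. -/

import Mathlib

open MeasureTheory ProbabilityTheory
open scoped NNReal ENNReal RealInnerProductSpace

/-- Density of the Gaussian distribution `N(m, s²)`. -/
noncomputable def gpdf (m s y : ℝ) : ℝ :=
  (1 / (s * Real.sqrt (2 * Real.pi))) * Real.exp (-(y - m) ^ 2 / (2 * s ^ 2))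

/-- Covariance of two real random variables: `Cov(U,V) = E(UV) - E(U)E(V)`. -/
noncomputable def cov {Ω : Type*} [MeasurableSpace Ω] (μ : Measure Ω) (U V : Ω → ℝ) : ℝ :=
  (∫ ω, U ω * V ω ∂μ) - (∫ ω, U ω ∂μ) * (∫ ω, V ω ∂μ)

/-- Pearson correlation coefficient `ρ(U,V) = Cov(U,V)/(σ_U σ_V)`. -/
noncomputable def pearson {Ω : Type*} [MeasurableSpace Ω] (μ : Measure Ω) (U V : Ω → ℝ) : ℝ :=
  cov μ U V / (Real.sqrt (variance U μ) * Real.sqrt (variance V μ))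

/-- The Hirschfeld–Gebelein–Rényi maximal correlation
`HGR(U,V) = sup_{f,g} ρ(f(U), g(V))` over measurable `f`, `g` such that `f(U)`, `g(V)`
have positive finite variance. -/
noncomputable def HGR {Ω β γ : Type*} [MeasurableSpace Ω] [MeasurableSpace β]
    [MeasurableSpace γ] (μ : Measure Ω) (U : Ω → β) (V : Ω → γ) : ℝ :=
  sSup {r : ℝ | ∃ f : β → ℝ, ∃ g : γ → ℝ, Measurable f ∧ Measurable g ∧
      MemLp (fun ω => f (U ω)) 2 μ ∧ MemLp (fun ω => g (V ω)) 2 μ ∧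
      0 < variance (fun ω => f (U ω)) μ ∧ 0 < variance (fun ω => g (V ω)) μ ∧
      r = pearson μ (fun ω => f (U ω)) (fun ω => g (V ω))}



section Aux

variable {Ω : Type*} [MeasurableSpace Ω] {μ : Measure Ω}

lemma aux_measurable_tan : Measurable Real.tan := by
  have : Real.tan = fun x => Real.sin x / Real.cos x := funext Real.tan_eq_sin_div_cos
  rw [this]
  exact Real.measurable_sin.div Real.measurable_cos

lemma aux_variance_congr {A B : Ω → ℝ} (h : A =ᵐ[μ] B) : variance A μ = variance B μ := by
  have hi : μ[A] = μ[B] := integral_congr_ae h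
  unfold ProbabilityTheory.variance ProbabilityTheory.evariance
  rw [hi]
  congr 1
  apply lintegral_congr_ae
  filter_upwards [h] with ω hω
  rw [hω]

lemma aux_integrable_mul [IsProbabilityMeasure μ] {A B : Ω → ℝ}
    (hA : MemLp A 2 μ) (hB : MemLp B 2 μ) : Integrable (fun ω => A ω * B ω) μ := by
  have h := L2.integrable_inner (𝕜 := ℝ) (hA.toLp A) (hB.toLp B)
  refine h.congr ?_
  filter_upwards [hA.coeFn_toLp, hB.coeFn_toLp] with ω h1 h2
  simp [h1, h2, RCLike.inner_apply, conj_trivial]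
  ring

lemma aux_cov_le [IsProbabilityMeasure μ] {A B : Ω → ℝ}
    (hA : MemLp A 2 μ) (hB : MemLp B 2 μ) :
    cov μ A B ≤ Real.sqrt (variance A μ) * Real.sqrt (variance B μ) := by
  set a := ∫ ω, A ω ∂μ with ha
  set b := ∫ ω, B ω ∂μ with hb
  have hA' : MemLp (fun ω => A ω - a) 2 μ := hA.sub (memLp_const a)
  have hB' : MemLp (fun ω => B ω - b) 2 μ := hB.sub (memLp_const b)
  set f := hA'.toLp (fun ω => A ω - a) with hf
  set g := hB'.toLp (fun ω => B ω - b) with hg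
  have hfa : f =ᵐ[μ] fun ω => A ω - a := hA'.coeFn_toLp
  have hgb : g =ᵐ[μ] fun ω => B ω - b := hB'.coeFn_toLp
  have hAB : Integrable (fun ω => A ω * B ω) μ := aux_integrable_mul hA hB
  have hiA : Integrable A μ := hA.integrable one_le_two
  have hiB : Integrable B μ := hB.integrable one_le_two
  -- cov = ∫ (A - a)(B - b)
  have key1 : cov μ A B = ∫ ω, (A ω - a) * (B ω - b) ∂μ := by
    have expand : (fun ω => (A ω - a) * (B ω - b))
        = fun ω => A ω * B ω - (a * B ω + b * A ω - a * b) := by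
      funext ω; ring
    have hI4 : Integrable (fun ω => a * B ω) μ := hiB.const_mul a
    have hI5 : Integrable (fun ω => b * A ω) μ := hiA.const_mul b
    have hI3 : Integrable (fun ω => a * B ω + b * A ω) μ := hI4.add hI5
    have hI2 : Integrable (fun ω => a * B ω + b * A ω - a * b) μ := hI3.sub (integrable_const _)
    rw [expand, integral_sub hAB hI2, integral_sub hI3 (integrable_const _),
      integral_add hI4 hI5, integral_const_mul, integral_const_mul, integral_const]
    simp only [measure_univ, probReal_univ, ENNReal.toReal_one, one_smul, cov, ← ha, ← hb]
    ring
  have key2 : (inner ℝ f g : ℝ) = ∫ ω, (A ω - a) * (B ω - b) ∂μ := by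
    rw [L2.inner_def]
    apply integral_congr_ae
    filter_upwards [hfa, hgb] with ω h1 h2
    simp [h1, h2, RCLike.inner_apply, conj_trivial]
    ring
  have keyf : Real.sqrt (variance A μ) = ‖f‖ := by
    have h1 : variance A μ = ∫ ω, (A ω - a) * (A ω - a) ∂μ := by
      rw [variance_eq_integral hA.aemeasurable]
      apply integral_congr_ae
      filter_upwards with ω
      simp [← ha]
      ring
    have h2 : (inner ℝ f f : ℝ) = ∫ ω, (A ω - a) * (A ω - a) ∂μ := by
      rw [L2.inner_def]
      apply integral_congr_ae
      filter_upwards [hfa] with ω hω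
      simp [hω, RCLike.inner_apply, conj_trivial]
      ring
    rw [h1, ← h2, real_inner_self_eq_norm_mul_norm, Real.sqrt_mul_self (norm_nonneg f)]
  have keyg : Real.sqrt (variance B μ) = ‖g‖ := by
    have h1 : variance B μ = ∫ ω, (B ω - b) * (B ω - b) ∂μ := by
      rw [variance_eq_integral hB.aemeasurable]
      apply integral_congr_ae
      filter_upwards with ω
      simp [← hb]
      ring
    have h2 : (inner ℝ g g : ℝ) = ∫ ω, (B ω - b) * (B ω - b) ∂μ := by
      rw [L2.inner_def]
      apply integral_congr_ae
      filter_upwards [hgb] with ω hω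
      simp [hω, RCLike.inner_apply, conj_trivial]
      ring
    rw [h1, ← h2, real_inner_self_eq_norm_mul_norm, Real.sqrt_mul_self (norm_nonneg g)]
  rw [key1, ← key2, keyf, keyg]
  exact real_inner_le_norm f g

lemma aux_pearson_le_one [IsProbabilityMeasure μ] {A B : Ω → ℝ}
    (hA : MemLp A 2 μ) (hB : MemLp B 2 μ)
    (hvA : 0 < variance A μ) (hvB : 0 < variance B μ) : pearson μ A B ≤ 1 := by
  rw [pearson, div_le_one (mul_pos (Real.sqrt_pos.mpr hvA) (Real.sqrt_pos.mpr hvB))]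
  exact aux_cov_le hA hB

end Aux

section Aux2
variable {Ω : Type*} [MeasurableSpace Ω] {μ : Measure Ω}

lemma aux_gauss_symm (v : ℝ≥0) :
    (gaussianReal 0 v).map (fun x : ℝ => -x) = gaussianReal 0 v := by
  have h := gaussianReal_map_const_mul (μ := 0) (v := v) (-1)
  have h2 : (NNReal.mk ((-1:ℝ)^2) (sq_nonneg _)) = 1 := by ext; norm_num
  rw [h2, one_mul, mul_zero] at h
  have h3 : ((-1 : ℝ) * ·) = (fun x : ℝ => -x) := by funext x; ring
  rwa [h3] at h

lemma aux_key_int [IsProbabilityMeasure μ] {Y U : Ω → ℝ} {v : ℝ≥0}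
    (hYm : Measurable Y) (hUm : Measurable U) (hY : μ.map Y = gaussianReal 0 v)
    (hindep : IndepFun U Y μ) {f : ℝ → ℝ} (hf : Measurable f) :
    ∫ ω, f (Real.arctan ((Y ω) ^ 2) + U ω * Real.pi) * Y ω ∂μ = 0 := by
  haveI : IsProbabilityMeasure (μ.map Y) := by rw [hY]; infer_instance
  haveI : IsProbabilityMeasure (μ.map U) := Measure.isProbabilityMeasure_map hUm.aemeasurable
  set π2 := (μ.map U).prod (μ.map Y) with hπ2
  have hmapT : μ.map (fun ω => (U ω, Y ω)) = π2 :=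
    (indepFun_iff_map_prod_eq_prod_map_map hUm.aemeasurable hYm.aemeasurable).mp hindep
  set G : ℝ × ℝ → ℝ := fun p => f (Real.arctan (p.2 ^ 2) + p.1 * Real.pi) * p.2 with hG
  have h1 : Measurable fun p : ℝ × ℝ => Real.arctan (p.2 ^ 2) + p.1 * Real.pi :=
    ((Real.continuous_arctan.measurable).comp (measurable_snd.pow_const 2)).add
      (measurable_fst.mul_const _)
  have hGm : Measurable G := (hf.comp h1).mul measurable_snd
  have step1 : ∫ ω, f (Real.arctan ((Y ω) ^ 2) + U ω * Real.pi) * Y ω ∂μ = ∫ p, G p ∂π2 := by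
    rw [← hmapT]
    exact (integral_map (hUm.prodMk hYm).aemeasurable hGm.aestronglyMeasurable).symm
  have hS : π2.map (fun p : ℝ × ℝ => (p.1, -p.2)) = π2 := by
    have he : (fun p : ℝ × ℝ => (p.1, -p.2)) = Prod.map id (fun x : ℝ => -x) := rfl
    rw [hπ2, he, ← Measure.map_prod_map _ _ measurable_id measurable_neg, Measure.map_id,
      hY, aux_gauss_symm]
  have step2 : ∫ p, G p ∂π2 = - ∫ p, G p ∂π2 := by
    conv_lhs => rw [← hS,
      integral_map (φ := fun p : ℝ × ℝ => (p.1, -p.2)) (measurable_fst.prodMk measurable_snd.neg).aemeasurable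
        hGm.aestronglyMeasurable]
    rw [← integral_neg]
    apply integral_congr_ae
    refine Filter.Eventually.of_forall fun p => ?_
    show G (p.1, -p.2) = -G p
    simp only [hG, neg_sq]
    ring
  have : ∫ p, G p ∂π2 = 0 := by linarith
  rw [step1, this]

lemma aux_EY_zero [IsProbabilityMeasure μ] {Y : Ω → ℝ} {v : ℝ≥0}
    (hYm : Measurable Y) (hY : μ.map Y = gaussianReal 0 v) :
    ∫ ω, Y ω ∂μ = 0 := by
  have h1 : ∫ ω, Y ω ∂μ = ∫ x, x ∂(μ.map Y) :=
    (integral_map hYm.aemeasurable aestronglyMeasurable_id).symm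
  have h2 : ∫ x, x ∂(gaussianReal 0 v) = - ∫ x, x ∂(gaussianReal 0 v) := by
    have h3 : ∫ x, x ∂((gaussianReal 0 v).map (fun x : ℝ => -x))
        = ∫ x : ℝ, -x ∂(gaussianReal 0 v) :=
      integral_map measurable_neg.aemeasurable measurable_id.aestronglyMeasurable
    rw [aux_gauss_symm, integral_neg] at h3
    exact h3
  rw [h1, hY]
  linarith

end Aux2

section Aux3
variable {Ω : Type*} [MeasurableSpace Ω] {μ : Measure Ω}

lemma aux_integrable_pdf_mul {v : ℝ≥0} (hv : v ≠ 0) {g : ℝ → ℝ}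
    (hg : Integrable (fun x : ℝ => g x * Real.exp (-(2 * (v : ℝ))⁻¹ * x ^ 2))) :
    Integrable g (gaussianReal 0 v) := by
  rw [gaussianReal_of_var_ne_zero 0 hv]
  rw [integrable_withDensity_iff (measurable_gaussianPDF 0 v)
    (Filter.Eventually.of_forall fun x => ENNReal.ofReal_lt_top)]
  have heq : (fun x : ℝ => g x * (gaussianPDF 0 v x).toReal)
      = fun x => (Real.sqrt (2 * Real.pi * v))⁻¹ * (g x * Real.exp (-(2 * (v : ℝ))⁻¹ * x ^ 2)) := by
    funext x
    rw [gaussianPDF, ENNReal.toReal_ofReal (gaussianPDFReal_nonneg _ _ _), gaussianPDFReal]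
    have : -(x - 0) ^ 2 / (2 * (v : ℝ)) = -(2 * (v : ℝ))⁻¹ * x ^ 2 := by
      rw [sub_zero]; ring
    rw [this]; ring
  rw [heq]
  exact hg.const_mul _

lemma aux_integrable_id_gauss {v : ℝ≥0} (hv : v ≠ 0) :
    Integrable (fun x : ℝ => x) (gaussianReal 0 v) := by
  apply aux_integrable_pdf_mul hv
  have hb : (0:ℝ) < (2 * (v : ℝ))⁻¹ := by
    have h0 : (0:ℝ) < v := lt_of_le_of_ne v.2 (by exact_mod_cast hv.symm)
    positivity
  exact integrable_mul_exp_neg_mul_sq hb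

lemma aux_integrable_pow4_gauss {v : ℝ≥0} (hv : v ≠ 0) :
    Integrable (fun x : ℝ => x ^ 4) (gaussianReal 0 v) := by
  apply aux_integrable_pdf_mul hv
  have hb : (0:ℝ) < (2 * (v : ℝ))⁻¹ := by
    have h0 : (0:ℝ) < v := lt_of_le_of_ne v.2 (by exact_mod_cast hv.symm)
    positivity
  have h := integrable_rpow_mul_exp_neg_mul_sq hb (s := 4) (by norm_num)
  have key : ∀ x : ℝ, x ^ (4:ℝ) = x ^ (4:ℕ) := fun x => by
    rw [show (4:ℝ) = ((4:ℕ):ℝ) by norm_num, Real.rpow_natCast]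
  refine h.congr (Filter.Eventually.of_forall fun x => ?_)
  simp only [key]

end Aux3


section Aux4
variable {Ω : Type*} [MeasurableSpace Ω] {μ : Measure Ω}

lemma aux_integrable_Y [IsProbabilityMeasure μ] {Y : Ω → ℝ} {v : ℝ≥0} (hv : v ≠ 0)
    (hYm : Measurable Y) (hY : μ.map Y = gaussianReal 0 v) : Integrable Y μ := by
  have h := aux_integrable_id_gauss hv
  rw [← hY] at h
  exact (integrable_map_measure measurable_id.aestronglyMeasurable hYm.aemeasurable).mp h

lemma aux_memL2_sq [IsProbabilityMeasure μ] {Y : Ω → ℝ} {v : ℝ≥0} (hv : v ≠ 0)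
    (hYm : Measurable Y) (hY : μ.map Y = gaussianReal 0 v) :
    MemLp (fun ω => (Y ω) ^ 2) 2 μ := by
  rw [memLp_two_iff_integrable_sq ((hYm.pow_const 2).aestronglyMeasurable)]
  have h4 : Integrable (fun ω => (Y ω) ^ 4) μ := by
    have h := aux_integrable_pow4_gauss hv
    rw [← hY] at h
    exact (integrable_map_measure ((measurable_id.pow_const 4).aestronglyMeasurable)
      hYm.aemeasurable).mp h
  exact h4.congr (Filter.Eventually.of_forall fun ω => by ring)

lemma aux_var_sq_pos [IsProbabilityMeasure μ] {Y : Ω → ℝ} {v : ℝ≥0} (hv : v ≠ 0)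
    (hYm : Measurable Y) (hY : μ.map Y = gaussianReal 0 v)
    (hmem : MemLp (fun ω => (Y ω) ^ 2) 2 μ) :
    0 < variance (fun ω => (Y ω) ^ 2) μ := by
  rcases lt_or_eq_of_le (variance_nonneg (fun ω => (Y ω) ^ 2) μ) with h | h
  · exact h
  exfalso
  have hev : evariance (fun ω => (Y ω) ^ 2) μ = 0 := by
    rw [← hmem.ofReal_variance_eq, ← h, ENNReal.ofReal_zero]
  have hZc : (fun ω => (Y ω) ^ 2) =ᵐ[μ] fun _ => μ[fun ω => (Y ω) ^ 2] :=
    (evariance_eq_zero_iff ((hYm.pow_const 2)).aemeasurable).mp hev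
  set c := μ[fun ω => (Y ω) ^ 2] with hc
  have hmeas : MeasurableSet {y : ℝ | y ^ 2 = c} :=
    (measurable_id.pow_const 2) (measurableSet_singleton c)
  have hae : ∀ᵐ y ∂(μ.map Y), y ^ 2 = c := by
    rw [ae_map_iff hYm.aemeasurable hmeas]
    exact hZc
  rw [hY] at hae
  have h1 : gaussianReal 0 v {y : ℝ | y ^ 2 = c} = 1 := by
    rw [← prob_compl_eq_zero_iff hmeas]
    rw [Set.compl_setOf]
    exact ae_iff.mp hae
  have h0 : gaussianReal 0 v {y : ℝ | y ^ 2 = c} = 0 := by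
    apply gaussianReal_absolutelyContinuous 0 hv
    have hsub : {y : ℝ | y ^ 2 = c} ⊆ {Real.sqrt c, -Real.sqrt c} := by
      intro y hy
      have hy2 : y ^ 2 = c := hy
      have habs : |y| = Real.sqrt c := by rw [← hy2, Real.sqrt_sq_eq_abs]
      rcases abs_choice y with h' | h'
      · left; show y = Real.sqrt c; rw [← habs, h']
      · right; show y = -Real.sqrt c; rw [← habs, h']; ring
    exact measure_mono_null hsub
      (Set.Countable.measure_zero (((Set.finite_singleton (-Real.sqrt c)).insert (Real.sqrt c)).countable) _)
  rw [h0] at h1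
  norm_num at h1

end Aux4

/-- Degenerate case `m = 0` (`α = 0`): `E(Y|X) = 0` a.s., the simplified (predictive)
maximal correlation `sup_f ρ(f(X), Y)` is `0`, while `HGR(X,Y) = 1`. -/
theorem degenerate_example_predictive_zero_hgr_one {Ω : Type*} [MeasurableSpace Ω]
    (μ : Measure Ω) [IsProbabilityMeasure μ] (Y U : Ω → ℝ) (σ : ℝ) (hσ : 0 < σ)
    (hYm : Measurable Y) (hUm : Measurable U)
    (hY : μ.map Y = gaussianReal 0 ⟨σ ^ 2, sq_nonneg σ⟩)
    (hU : μ.map U = (1/2 : ℝ≥0∞) • Measure.dirac (0 : ℝ) + (1/2 : ℝ≥0∞) • Measure.dirac 1)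
    (hindep : IndepFun U Y μ)
    (X : Ω → ℝ) (hX : X = fun ω => Real.arctan ((Y ω) ^ 2) + U ω * Real.pi) :
    (μ[Y | MeasurableSpace.comap X inferInstance] =ᵐ[μ] fun _ => (0 : ℝ)) ∧
      sSup {r : ℝ | ∃ f : ℝ → ℝ, Measurable f ∧ MemLp (fun ω => f (X ω)) 2 μ ∧
          0 < variance (fun ω => f (X ω)) μ ∧
          r = pearson μ (fun ω => f (X ω)) Y} = 0 ∧
      HGR μ X Y = 1 := by
  set v : ℝ≥0 := ⟨σ ^ 2, sq_nonneg σ⟩ with hv_def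
  have hv : v ≠ 0 := by
    intro h
    have h2 : σ ^ 2 = 0 := by
      have := congrArg NNReal.toReal h
      exact this
    have : σ = 0 := by nlinarith
    exact absurd this hσ.ne'
  have hXω : ∀ ω, X ω = Real.arctan ((Y ω) ^ 2) + U ω * Real.pi := fun ω => by rw [hX]
  have hXm : Measurable X := by
    rw [hX]
    exact ((Real.continuous_arctan.measurable).comp (hYm.pow_const 2)).add (hUm.mul_const _)
  have hkey : ∀ f : ℝ → ℝ, Measurable f → ∫ ω, f (X ω) * Y ω ∂μ = 0 := by
    intro f hf
    have := aux_key_int (μ := μ) hYm hUm hY hindep hf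
    rw [← this]
    apply integral_congr_ae
    filter_upwards with ω
    rw [hXω ω]
  have hEY : ∫ ω, Y ω ∂μ = 0 := aux_EY_zero hYm hY
  have hYint : Integrable Y μ := aux_integrable_Y hv hYm hY
  have hZ2 : MemLp (fun ω => (Y ω) ^ 2) 2 μ := aux_memL2_sq hv hYm hY
  have hZvar : 0 < variance (fun ω => (Y ω) ^ 2) μ := aux_var_sq_pos hv hYm hY hZ2
  have hUae : ∀ᵐ ω ∂μ, U ω = 0 ∨ U ω = 1 := by
    have hsm : MeasurableSet {x : ℝ | ¬(x = 0 ∨ x = 1)} := by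
      have he : {x : ℝ | ¬(x = 0 ∨ x = 1)} = (({0} : Set ℝ) ∪ {1})ᶜ := by
        ext x
        simp only [Set.mem_setOf_eq, Set.mem_compl_iff, Set.mem_union, Set.mem_singleton_iff]
      rw [he]
      exact ((measurableSet_singleton 0).union (measurableSet_singleton 1)).compl
    rw [ae_iff]
    have hpre : {ω | ¬(U ω = 0 ∨ U ω = 1)} = U ⁻¹' {x : ℝ | ¬(x = 0 ∨ x = 1)} := rfl
    rw [hpre, ← Measure.map_apply hUm hsm, hU]
    simp [Measure.dirac_apply' _ hsm]
  have htan : (fun ω => Real.tan (X ω)) =ᵐ[μ] fun ω => (Y ω) ^ 2 := by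
    filter_upwards [hUae] with ω h
    rcases h with h | h
    · rw [hXω ω, h, zero_mul, add_zero, Real.tan_arctan]
    · rw [hXω ω, h, one_mul, Real.tan_add_pi, Real.tan_arctan]
  have htan2 : MemLp (fun ω => Real.tan (X ω)) 2 μ := hZ2.ae_eq htan.symm
  have htanvar : variance (fun ω => Real.tan (X ω)) μ = variance (fun ω => (Y ω) ^ 2) μ :=
    aux_variance_congr htan
  have hpear0 : ∀ f : ℝ → ℝ, Measurable f → pearson μ (fun ω => f (X ω)) Y = 0 := by
    intro f hf
    simp [pearson, cov, hkey f hf, hEY]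
  refine ⟨?_, ?_, ?_⟩
  · -- conditional expectation is 0
    have hm : MeasurableSpace.comap X inferInstance ≤ _ := hXm.comap_le
    refine (ae_eq_condExp_of_forall_setIntegral_eq hm hYint
      (fun s _ _ => (integrable_const (0:ℝ)).integrableOn)
      (fun s hs _ => ?_) (stronglyMeasurable_const.aestronglyMeasurable)).symm
    obtain ⟨A, hA, rfl⟩ := hs
    rw [integral_zero]
    symm
    rw [← integral_indicator (hm _ ⟨A, hA, rfl⟩)]
    have heq2 : (Set.indicator (X ⁻¹' A) Y)
        = fun ω => Set.indicator A (fun _ => (1:ℝ)) (X ω) * Y ω := by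
      funext ω
      by_cases hω : X ω ∈ A
      · rw [Set.indicator_of_mem hω, Set.indicator_of_mem (show ω ∈ X ⁻¹' A from hω), one_mul]
      · rw [Set.indicator_of_notMem hω,
          Set.indicator_of_notMem (show ω ∉ X ⁻¹' A from hω), zero_mul]
    rw [heq2]
    exact hkey _ (measurable_const.indicator hA)
  · -- predictive maximal correlation is 0
    have hset : {r : ℝ | ∃ f : ℝ → ℝ, Measurable f ∧ MemLp (fun ω => f (X ω)) 2 μ ∧
        0 < variance (fun ω => f (X ω)) μ ∧
        r = pearson μ (fun ω => f (X ω)) Y} = {0} := by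
      ext r
      simp only [Set.mem_setOf_eq, Set.mem_singleton_iff]
      constructor
      · rintro ⟨f, hf, -, -, rfl⟩
        exact hpear0 f hf
      · rintro rfl
        exact ⟨Real.tan, aux_measurable_tan, htan2, htanvar ▸ hZvar, (hpear0 _ aux_measurable_tan).symm⟩
    rw [hset, csSup_singleton]
  · -- HGR = 1
    have hpear1 : pearson μ (fun ω => Real.tan (X ω)) (fun ω => (Y ω) ^ 2) = 1 := by
      have hcov : cov μ (fun ω => Real.tan (X ω)) (fun ω => (Y ω) ^ 2)
          = variance (fun ω => (Y ω) ^ 2) μ := by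
        have e1 : ∫ ω, Real.tan (X ω) * (Y ω) ^ 2 ∂μ = ∫ ω, (Y ω) ^ 2 * (Y ω) ^ 2 ∂μ :=
          integral_congr_ae (by filter_upwards [htan] with ω h; rw [h])
        have e2 : ∫ ω, Real.tan (X ω) ∂μ = ∫ ω, (Y ω) ^ 2 ∂μ := integral_congr_ae htan
        rw [cov, e1, e2, variance_eq_sub hZ2]
        congr 1
        · apply integral_congr_ae
          filter_upwards with ω
          simp [pow_two]
        · ring
      rw [pearson, hcov, htanvar, Real.mul_self_sqrt hZvar.le]
      exact div_self hZvar.ne'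
    have h1mem : (1:ℝ) ∈ {r : ℝ | ∃ f : ℝ → ℝ, ∃ g : ℝ → ℝ, Measurable f ∧ Measurable g ∧
        MemLp (fun ω => f (X ω)) 2 μ ∧ MemLp (fun ω => g (Y ω)) 2 μ ∧
        0 < variance (fun ω => f (X ω)) μ ∧ 0 < variance (fun ω => g (Y ω)) μ ∧
        r = pearson μ (fun ω => f (X ω)) (fun ω => g (Y ω))} :=
      ⟨Real.tan, fun y => y ^ 2, aux_measurable_tan, measurable_id.pow_const 2, htan2, hZ2,
        htanvar ▸ hZvar, hZvar, hpear1.symm⟩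
    have hub : ∀ r ∈ {r : ℝ | ∃ f : ℝ → ℝ, ∃ g : ℝ → ℝ, Measurable f ∧ Measurable g ∧
        MemLp (fun ω => f (X ω)) 2 μ ∧ MemLp (fun ω => g (Y ω)) 2 μ ∧
        0 < variance (fun ω => f (X ω)) μ ∧ 0 < variance (fun ω => g (Y ω)) μ ∧
        r = pearson μ (fun ω => f (X ω)) (fun ω => g (Y ω))}, r ≤ 1 := by
      rintro r ⟨f, g, hf, hg, hf2, hg2, hvf, hvg, rfl⟩
      exact aux_pearson_le_one hf2 hg2 hvf hvg
    unfold HGR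
    exact le_antisymm (csSup_le ⟨1, h1mem⟩ hub) (le_csSup ⟨1, hub⟩ h1mem)
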